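/- Let D ⊂ ℝ^d be a nonempty compact set and let f : ℝ^d → ℝ be continuous. Fix constants ρ ≥ 1, 0 < c_Σ ≤ C_Σ, and 0 < w₋ ≤ w₊. For every ε > 0 there exists h₀ > 0 with the following property: for every finite set of centers μ_1,…,μ_K ∈ D whose fill distance h = sup_{x∈D} min_{1≤k≤K} ‖x−μ_k‖ satisfies 0 < h ≤ h₀ and whose separation radius q = (1/2) min_{i≠j} ‖μ_i−μ_j‖ satisfies h ≤ ρ q, for all weights w_k ∈ [w₋, w₊] and all symmetric positive definite matrices Σ_k with c_Σ h² I ⪯ Σ_k ⪯ C_Σ h² I, the normalized Shepard approximant f_K(x) = Σ_{k=1}^K ψ_k(x) f(μ_k) satisfies sup_{x∈D} |f(x) − f_K(x)| < ε. -/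

import Mathlib

open MeasureTheory

/-- The anisotropic Gaussian basis function
`φₖ(x) = exp(−(1/2)(x−μₖ)ᵀ Σₖ⁻¹ (x−μₖ))`. -/
noncomputable def gaussBasis {d K : ℕ} (S : Fin K → Matrix (Fin d) (Fin d) ℝ)
    (μ : Fin K → EuclideanSpace ℝ (Fin d)) (k : Fin K)
    (x : EuclideanSpace ℝ (Fin d)) : ℝ :=
  Real.exp (-(1 / 2 : ℝ) * ∑ i, ∑ j, (x i - μ k i) * (S k)⁻¹ i j * (x j - μ k j))

/-- The normalized Shepard weight `ψₖ(x) = wₖ φₖ(x) / ∑ⱼ wⱼ φⱼ(x)`. -/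
noncomputable def shepardWeight {d K : ℕ} (S : Fin K → Matrix (Fin d) (Fin d) ℝ)
    (μ : Fin K → EuclideanSpace ℝ (Fin d)) (w : Fin K → ℝ) (k : Fin K)
    (x : EuclideanSpace ℝ (Fin d)) : ℝ :=
  w k * gaussBasis S μ k x / ∑ j, w j * gaussBasis S μ j x

set_option maxHeartbeats 1000000
open Metric Filter Real Matrix Finset
open Matrix Finset

lemma dot_self_nonneg' {n : ℕ} (v : Fin n → ℝ) : 0 ≤ v ⬝ᵥ v :=
  Finset.sum_nonneg fun i _ => mul_self_nonneg _

lemma psd_apply {n : ℕ} {T : Matrix (Fin n) (Fin n) ℝ} (hT : T.PosSemidef)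
    (v : Fin n → ℝ) : 0 ≤ v ⬝ᵥ (T *ᵥ v) := by
  simpa using hT.dotProduct_mulVec_nonneg v

lemma psd_cauchy {n : ℕ} {T : Matrix (Fin n) (Fin n) ℝ} (hT : T.PosSemidef)
    (v y : Fin n → ℝ) : (v ⬝ᵥ (T *ᵥ y))^2 ≤ (v ⬝ᵥ (T *ᵥ v)) * (y ⬝ᵥ (T *ᵥ y)) := by
  have hsym : ∀ a b : Fin n → ℝ, a ⬝ᵥ (T *ᵥ b) = b ⬝ᵥ (T *ᵥ a) := by
    intro a b
    have hT' : ∀ i j, T i j = T j i := by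
      intro i j
      conv_lhs => rw [← hT.1]
      simp [Matrix.conjTranspose_apply]
    simp only [dotProduct, Matrix.mulVec, Finset.mul_sum]
    rw [Finset.sum_comm]
    refine Finset.sum_congr rfl fun i _ => Finset.sum_congr rfl fun j _ => ?_
    rw [hT' j i]; ring
  have key : ∀ t : ℝ, 0 ≤ (y ⬝ᵥ (T *ᵥ y)) * (t * t) + (2 * (v ⬝ᵥ (T *ᵥ y))) * t
      + (v ⬝ᵥ (T *ᵥ v)) := by
    intro t
    have h0 := psd_apply hT (v + t • y)
    have e1 : (v + t • y) ⬝ᵥ (T *ᵥ (v + t • y))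
        = (v ⬝ᵥ (T *ᵥ v)) + t * (v ⬝ᵥ (T *ᵥ y)) + t * (y ⬝ᵥ (T *ᵥ v))
          + t * t * (y ⬝ᵥ (T *ᵥ y)) := by
      simp [Matrix.mulVec_add, Matrix.mulVec_smul, dotProduct_add, add_dotProduct,
        dotProduct_smul, smul_dotProduct, smul_eq_mul]
      ring
    rw [e1, hsym y v] at h0
    nlinarith [h0]
  have hd := discrim_le_zero key
  rw [discrim] at hd
  nlinarith [hd]

lemma quad_inv_bounds {n : ℕ} {S : Matrix (Fin n) (Fin n) ℝ} {a b : ℝ}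
    (ha : 0 < a) (hb : 0 < b) (hS : S.PosDef)
    (h1 : (S - a • 1).PosSemidef) (h2 : (b • 1 - S).PosSemidef) (v : Fin n → ℝ) :
    (v ⬝ᵥ v) / b ≤ v ⬝ᵥ (S⁻¹ *ᵥ v) ∧ v ⬝ᵥ (S⁻¹ *ᵥ v) ≤ (v ⬝ᵥ v) / a := by
  set y := S⁻¹ *ᵥ v with hy
  have hdet : IsUnit S.det := (Matrix.isUnit_iff_isUnit_det S).mp hS.isUnit
  have hv : S *ᵥ y = v := by
    rw [hy, Matrix.mulVec_mulVec, Matrix.mul_nonsing_inv _ hdet, Matrix.one_mulVec]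
  have h1y : a * (y ⬝ᵥ y) ≤ y ⬝ᵥ (S *ᵥ y) := by
    have := psd_apply h1 y
    simp only [Matrix.sub_mulVec, Matrix.smul_mulVec, Matrix.one_mulVec,
      dotProduct_sub, dotProduct_smul, smul_eq_mul] at this
    linarith
  have h2v : v ⬝ᵥ (S *ᵥ v) ≤ b * (v ⬝ᵥ v) := by
    have := psd_apply h2 v
    simp only [Matrix.sub_mulVec, Matrix.smul_mulVec, Matrix.one_mulVec,
      dotProduct_sub, dotProduct_smul, smul_eq_mul] at this
    linarith
  have hvy : v ⬝ᵥ y = y ⬝ᵥ (S *ᵥ y) := by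
    conv_lhs => rw [← hv]
    rw [dotProduct_comm]
  have hyy : 0 ≤ y ⬝ᵥ y := dot_self_nonneg' y
  have hvv : 0 ≤ v ⬝ᵥ v := dot_self_nonneg' v
  have hvy0 : 0 ≤ v ⬝ᵥ y := by rw [hvy]; nlinarith
  constructor
  · -- lower bound
    have hcs := psd_cauchy hS.posSemidef v y
    rw [hv, dotProduct_comm y v] at hcs
    rcases eq_or_lt_of_le hvv with h0 | h0
    · rw [div_le_iff₀ hb]
      nlinarith
    · rw [div_le_iff₀ hb]
      nlinarith [mul_le_mul_of_nonneg_right h2v hvy0, mul_pos h0 h0]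
  · -- upper bound
    have hcs : (v ⬝ᵥ y)^2 ≤ (v ⬝ᵥ v) * (y ⬝ᵥ y) := by
      have := Finset.sum_mul_sq_le_sq_mul_sq Finset.univ v y
      simpa [dotProduct, pow_two, mul_self_nonneg] using
        (by simpa [pow_two] using this : (∑ i, v i * y i)^2 ≤ (∑ i, v i * v i) * ∑ i, y i * y i)
    have hyyb : a * (y ⬝ᵥ y) ≤ v ⬝ᵥ y := by rw [hvy]; exact h1y
    rw [le_div_iff₀ ha]
    rcases eq_or_lt_of_le hvy0 with h0 | h0
    · rw [← h0]; simpa using hvv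
    · nlinarith [mul_le_mul_of_nonneg_left hyyb h0.le, mul_pos h0 h0,
        mul_nonneg hyy ha.le]
open MeasureTheory Metric Filter Real

lemma packing_bound {d K : ℕ} (x₀ : EuclideanSpace ℝ (Fin d)) {R q : ℝ}
    (hq : 0 < q) (hR : 0 ≤ R) (μ : Fin K → EuclideanSpace ℝ (Fin d))
    (hμ : ∀ k, dist (μ k) x₀ ≤ R)
    (hsep : ∀ i j, i ≠ j → 2 * q ≤ dist (μ i) (μ j)) :
    (K : ℝ) * q ^ d ≤ (R + q) ^ d := by
  rcases Nat.eq_zero_or_pos d with hd | hd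
  · subst hd
    have hK : K ≤ 1 := by
      by_contra hK
      push_neg at hK
      have h01 : (⟨0, by omega⟩ : Fin K) ≠ ⟨1, by omega⟩ := by
        simp [Fin.ext_iff]
      have hd0 : dist (μ ⟨0, by omega⟩) (μ ⟨1, by omega⟩) = 0 := by
        rw [EuclideanSpace.dist_eq]
        simp
      linarith [hsep _ _ h01]
    have h1K : (K : ℝ) ≤ 1 := by exact_mod_cast hK
    simpa using h1K
  · haveI : Nonempty (Fin d) := ⟨⟨0, hd⟩⟩
    haveI : Nontrivial (EuclideanSpace ℝ (Fin d)) := by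
      refine ⟨0, EuclideanSpace.single ⟨0, hd⟩ 1, fun hcon => ?_⟩
      have := congrArg (fun z : EuclideanSpace ℝ (Fin d) => z ⟨0, hd⟩) hcon
      simp [EuclideanSpace.single_apply] at this
    set V := volume (ball (0 : EuclideanSpace ℝ (Fin d)) 1) with hV
    have hVpos : 0 < V := measure_ball_pos _ _ one_pos
    have hVlt : V < ⊤ := measure_ball_lt_top
    have hfin : Module.finrank ℝ (EuclideanSpace ℝ (Fin d)) = d := by
      simp [finrank_euclideanSpace]
    have hball : ∀ k, volume (ball (μ k) q) = ENNReal.ofReal (q ^ d) * V := by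
      intro k
      rw [Measure.addHaar_ball volume (μ k) hq.le, hfin]
    have hdisj : Pairwise (Function.onFun Disjoint fun k => ball (μ k) q) := by
      intro i j hij
      exact ball_disjoint_ball (by linarith [hsep i j hij])
    have hsub : (⋃ k, ball (μ k) q) ⊆ ball x₀ (R + q) := by
      intro y hy
      simp only [Set.mem_iUnion, mem_ball] at hy ⊢
      obtain ⟨k, hk⟩ := hy
      calc dist y x₀ ≤ dist y (μ k) + dist (μ k) x₀ := dist_triangle _ _ _
        _ < q + R := by linarith [hμ k]
        _ = R + q := by ring
    have hRq : 0 < R + q := by linarith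
    have hmeas : volume (⋃ k, ball (μ k) q) = K * (ENNReal.ofReal (q ^ d) * V) := by
      rw [measure_iUnion hdisj fun k => measurableSet_ball]
      rw [tsum_fintype]
      simp [hball, Finset.sum_const]
    have hle : ((K : ENNReal) * ENNReal.ofReal (q ^ d)) * V
        ≤ ENNReal.ofReal ((R + q) ^ d) * V := by
      rw [mul_assoc, ← hmeas]
      calc volume (⋃ k, ball (μ k) q) ≤ volume (ball x₀ (R + q)) := measure_mono hsub
        _ = ENNReal.ofReal ((R + q) ^ d) * V := by
            rw [Measure.addHaar_ball volume x₀ hRq.le, hfin]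
    have hle2 : (K : ENNReal) * ENNReal.ofReal (q ^ d) ≤ ENNReal.ofReal ((R + q) ^ d) :=
      (ENNReal.mul_le_mul_iff_left hVpos.ne' hVlt.ne).mp hle
    have : ENNReal.ofReal ((K : ℝ) * q ^ d) ≤ ENNReal.ofReal ((R + q) ^ d) := by
      rwa [ENNReal.ofReal_mul (by positivity), ENNReal.ofReal_natCast]
    exact (ENNReal.ofReal_le_ofReal_iff (by positivity)).mp this

lemma decay_small (A κ : ℝ) (hκ : 0 < κ) (d : ℕ) {ε' : ℝ} (hε' : 0 < ε') :
    ∃ h₀ > (0:ℝ), ∀ h : ℝ, 0 < h → h ≤ h₀ → A / h ^ d * Real.exp (-κ / h ^ 2) < ε' := by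
  have hF : Tendsto (fun u : ℝ => u ^ (d : ℝ) * Real.exp (-κ * u ^ 2)) atTop (nhds 0) := by
    have hlo := (rpow_mul_exp_neg_mul_sq_isLittleO_exp_neg hκ (d : ℝ)).isBigO
    refine hlo.trans_tendsto ?_
    have h3 : Tendsto (fun x : ℝ => -(1/2 : ℝ) * x) atTop atBot :=
      Tendsto.const_mul_atTop_of_neg (by norm_num) tendsto_id
    exact Real.tendsto_exp_atBot.comp h3
  have hcomp : Tendsto (fun h : ℝ => A * ((h⁻¹) ^ (d:ℝ) * Real.exp (-κ * (h⁻¹) ^ 2)))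
      (nhdsWithin 0 (Set.Ioi 0)) (nhds 0) := by
    have := (hF.comp tendsto_inv_nhdsGT_zero).const_mul A
    simpa using this
  have hcong : Tendsto (fun h : ℝ => A / h ^ d * Real.exp (-κ / h ^ 2))
      (nhdsWithin 0 (Set.Ioi 0)) (nhds 0) := by
    refine hcomp.congr' ?_
    filter_upwards [self_mem_nhdsWithin] with h hh
    rw [Set.mem_Ioi] at hh
    rw [Real.rpow_natCast, inv_pow, inv_pow]
    rw [div_eq_mul_inv, div_eq_mul_inv, mul_assoc, neg_mul, ← neg_mul κ]
  have hev : ∀ᶠ h in nhdsWithin 0 (Set.Ioi 0),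
      A / h ^ d * Real.exp (-κ / h ^ 2) < ε' := hcong.eventually_lt_const hε'
  rw [eventually_iff, Metric.mem_nhdsWithin_iff] at hev
  obtain ⟨δ, hδ, hsubs⟩ := hev
  refine ⟨δ / 2, by positivity, fun h hh hle => hsubs ⟨?_, hh⟩⟩
  simp only [mem_ball, Real.dist_eq, sub_zero]
  rw [abs_of_pos hh]
  linarith


section MainAux
variable {d : ℕ}

lemma euclid_norm_sq (y z : EuclideanSpace ℝ (Fin d)) :
    ‖y - z‖ ^ 2 = ∑ i, (y i - z i) ^ 2 := by
  rw [EuclideanSpace.norm_eq, Real.sq_sqrt (by positivity)]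
  refine Finset.sum_congr rfl fun i _ => ?_
  simp [Real.norm_eq_abs, sq_abs]

lemma gaussBasis_bounds {K : ℕ} (S : Fin K → Matrix (Fin d) (Fin d) ℝ)
    (μ : Fin K → EuclideanSpace ℝ (Fin d)) {a b : ℝ} (ha : 0 < a) (hb : 0 < b)
    (hSpd : ∀ k, (S k).PosDef)
    (hSbnd : ∀ k, ((S k) - a • 1).PosSemidef ∧ (b • 1 - (S k)).PosSemidef)
    (k : Fin K) (z : EuclideanSpace ℝ (Fin d)) :
    Real.exp (-(1/2) * (‖z - μ k‖ ^ 2 / a)) ≤ gaussBasis S μ k z ∧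
      gaussBasis S μ k z ≤ Real.exp (-(1/2) * (‖z - μ k‖ ^ 2 / b)) := by
  set v : Fin d → ℝ := fun i => z i - μ k i with hvdef
  have hsum : ∑ i, ∑ j, (z i - μ k i) * (S k)⁻¹ i j * (z j - μ k j)
      = v ⬝ᵥ ((S k)⁻¹ *ᵥ v) := by
    simp only [dotProduct, Matrix.mulVec, Finset.mul_sum, hvdef]
    exact Finset.sum_congr rfl fun i _ => Finset.sum_congr rfl fun j _ => by ring
  have hnv : v ⬝ᵥ v = ‖z - μ k‖ ^ 2 := by
    rw [euclid_norm_sq]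
    simp only [dotProduct, hvdef]
    exact Finset.sum_congr rfl fun i _ => by ring
  obtain ⟨hlow, hup⟩ := quad_inv_bounds ha hb (hSpd k) (hSbnd k).1 (hSbnd k).2 v
  rw [hnv] at hlow hup
  unfold gaussBasis
  rw [hsum]
  constructor
  · apply Real.exp_le_exp.mpr; nlinarith
  · apply Real.exp_le_exp.mpr; nlinarith

end MainAux

/-- Uniform convergence of normalized Gaussian Shepard approximants of a
continuous function on a compact set, as the fill distance tends to zero, uniformly over
quasi-uniform centers, bounded weights and comparable covariances. -/
theorem shepard_uniform_approximation
    {d : ℕ} (D : Set (EuclideanSpace ℝ (Fin d))) (hDcpt : IsCompact D) (hDne : D.Nonempty)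
    (f : EuclideanSpace ℝ (Fin d) → ℝ) (hf : Continuous f)
    (ρ cSig CSig wlo whi : ℝ) (hρ : 1 ≤ ρ) (hcSig : 0 < cSig) (hcC : cSig ≤ CSig)
    (hwlo : 0 < wlo) (hw : wlo ≤ whi)
    (ε : ℝ) (hε : 0 < ε) :
    ∃ h₀ > (0 : ℝ), ∀ (K : ℕ) (μ : Fin K → EuclideanSpace ℝ (Fin d)) (h q : ℝ),
      (∀ k, μ k ∈ D) →
      h = ⨆ x : D, ⨅ k, ‖(x : EuclideanSpace ℝ (Fin d)) - μ k‖ →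
      0 < h → h ≤ h₀ →
      q = (1 / 2) * ⨅ p : {p : Fin K × Fin K // p.1 ≠ p.2}, ‖μ p.val.1 - μ p.val.2‖ →
      h ≤ ρ * q →
      ∀ (w : Fin K → ℝ) (S : Fin K → Matrix (Fin d) (Fin d) ℝ),
        (∀ k, wlo ≤ w k ∧ w k ≤ whi) →
        (∀ k, (S k).PosDef) →
        (∀ k, (S k - (cSig * h ^ 2) • 1).PosSemidef ∧ ((CSig * h ^ 2) • 1 - S k).PosSemidef) →
        ∀ x ∈ D, |f x - ∑ k, shepardWeight S μ w k x * f (μ k)| < ε := by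
  classical
  obtain ⟨x₀, hx₀⟩ := hDne
  obtain ⟨M, hM⟩ := hDcpt.exists_bound_of_continuousOn hf.continuousOn
  have hM0 : 0 ≤ M := le_trans (norm_nonneg (f x₀)) (hM x₀ hx₀)
  have hCSig : 0 < CSig := lt_of_lt_of_le hcSig hcC
  have hρ0 : 0 < ρ := lt_of_lt_of_le one_pos hρ
  -- uniform continuity
  have hUC := hDcpt.uniformContinuousOn_of_continuous hf.continuousOn
  rw [Metric.uniformContinuousOn_iff] at hUC
  obtain ⟨r, hr, hUC⟩ := hUC (ε/2) (by linarith)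
  -- boundedness of D
  obtain ⟨R₀, hR₀⟩ := hDcpt.isBounded.subset_closedBall x₀
  set R := max R₀ 0 with hRdef
  have hR : 0 ≤ R := le_max_right _ _
  have hDR : ∀ y ∈ D, dist y x₀ ≤ R := fun y hy =>
    le_trans (Metric.mem_closedBall.mp (hR₀ hy)) (le_max_left _ _)
  -- decay
  set A := (ρ * (R + 1)) ^ d with hAdef
  have hA : 0 ≤ A := by positivity
  set B := 2 * M * whi * Real.exp (1 / (2 * cSig)) / wlo with hBdef
  have hB : 0 ≤ B := div_nonneg
    (mul_nonneg (mul_nonneg (by linarith) (by linarith)) (Real.exp_pos _).le) hwlo.le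
  set κ := r ^ 2 / (2 * CSig) with hκdef
  have hκ : 0 < κ := by positivity
  obtain ⟨h₀', hh₀', hdecay⟩ := decay_small (A * B) κ hκ d (by linarith : (0:ℝ) < ε/2)
  refine ⟨min h₀' 1, lt_min hh₀' one_pos, ?_⟩
  intro K μ h q hμD hhdef hhpos hhle hqdef hhρq w S hwB hSpd hSbnd x hx
  have hh1 : h ≤ 1 := le_trans hhle (min_le_right _ _)
  have hhh0 : h ≤ h₀' := le_trans hhle (min_le_left _ _)
  -- K ≠ 0
  rcases Nat.eq_zero_or_pos K with hK0 | hK0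
  · exfalso
    subst hK0
    haveI : Nonempty D := ⟨⟨x, hx⟩⟩
    simp only [Real.iInf_of_isEmpty] at hhdef
    rw [ciSup_const] at hhdef
    linarith
  haveI : Nonempty (Fin K) := ⟨⟨0, hK0⟩⟩
  -- separation
  have hq0 : 0 < q := by nlinarith
  have hsep : ∀ i j : Fin K, i ≠ j → 2 * q ≤ ‖μ i - μ j‖ := by
    intro i j hij
    have hbdd : BddBelow (Set.range fun p : {p : Fin K × Fin K // p.1 ≠ p.2} =>
        ‖μ p.val.1 - μ p.val.2‖) := ⟨0, by rintro z ⟨p, rfl⟩; exact norm_nonneg _⟩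
    have := ciInf_le hbdd (⟨(i, j), hij⟩ : {p : Fin K × Fin K // p.1 ≠ p.2})
    rw [hqdef] at *
    simp only at this
    linarith
  -- fill distance
  have hbb : ∀ z : EuclideanSpace ℝ (Fin d),
      BddBelow (Set.range fun k : Fin K => ‖z - μ k‖) :=
    fun z => ⟨0, by rintro t ⟨k, rfl⟩; exact norm_nonneg _⟩
  have hfill : ∀ y ∈ D, ∃ k, ‖y - μ k‖ ≤ h := by
    intro y hy
    obtain ⟨k, hk⟩ := exists_eq_ciInf_of_finite (f := fun k : Fin K => ‖y - μ k‖)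
    refine ⟨k, ?_⟩
    rw [hk, hhdef]
    have hbdd : BddAbove (Set.range fun z : D =>
        ⨅ k : Fin K, ‖(z : EuclideanSpace ℝ (Fin d)) - μ k‖) := by
      refine ⟨2 * R, ?_⟩
      rintro t ⟨z, rfl⟩
      have h1 : ‖(z : EuclideanSpace ℝ (Fin d)) - μ ⟨0, hK0⟩‖ ≤ 2 * R := by
        rw [← dist_eq_norm]
        calc dist (z : EuclideanSpace ℝ (Fin d)) (μ ⟨0, hK0⟩)
            ≤ dist (z : EuclideanSpace ℝ (Fin d)) x₀ + dist x₀ (μ ⟨0, hK0⟩) :=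
              dist_triangle _ _ _
          _ ≤ R + R := by
              have := hDR _ z.2
              have h2 := hDR _ (hμD ⟨0, hK0⟩)
              rw [dist_comm x₀]
              linarith
          _ = 2 * R := by ring
      exact le_trans (ciInf_le (hbb _) ⟨0, hK0⟩) h1
    exact le_ciSup hbdd (⟨y, hy⟩ : D)
  -- quadratic bounds
  have ha : 0 < cSig * h ^ 2 := by positivity
  have hb : 0 < CSig * h ^ 2 := by positivity
  have hgb := gaussBasis_bounds S μ ha hb hSpd hSbnd
  have hφpos : ∀ k, 0 < gaussBasis S μ k x := fun k => Real.exp_pos _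
  have hwpos : ∀ k, 0 < w k := fun k => lt_of_lt_of_le hwlo (hwB k).1
  -- denominator
  obtain ⟨kstar, hkstar⟩ := hfill x hx
  set den := ∑ j, w j * gaussBasis S μ j x with hdendef
  set den₀ := wlo * Real.exp (-(1 / (2 * cSig))) with hden₀def
  have hden₀ : 0 < den₀ := by positivity
  have hdenlo : den₀ ≤ den := by
    have hφstar : Real.exp (-(1 / (2 * cSig))) ≤ gaussBasis S μ kstar x := by
      refine le_trans ?_ (hgb kstar x).1
      apply Real.exp_le_exp.mpr
      have h1 : ‖x - μ kstar‖ ^ 2 ≤ h ^ 2 := by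
        nlinarith [norm_nonneg (x - μ kstar)]
      have h2 : ‖x - μ kstar‖ ^ 2 / (cSig * h ^ 2) ≤ 1 / cSig := by
        rw [div_le_div_iff₀ ha hcSig]
        nlinarith
      have h3 : (0:ℝ) < 2 := two_pos
      rw [neg_mul, neg_le_neg_iff]
      calc (1:ℝ)/2 * (‖x - μ kstar‖ ^ 2 / (cSig * h ^ 2)) ≤ 1/2 * (1/cSig) := by linarith
        _ = 1 / (2 * cSig) := by field_simp
    calc den₀ ≤ w kstar * gaussBasis S μ kstar x := by
          apply mul_le_mul (hwB kstar).1 hφstar (Real.exp_pos _).le (hwpos kstar).le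
      _ ≤ den := Finset.single_le_sum
          (fun k _ => le_of_lt (mul_pos (hwpos k) (hφpos k))) (Finset.mem_univ kstar)
  have hdenpos : 0 < den := lt_of_lt_of_le hden₀ hdenlo
  -- shepard weights
  have hψ : ∀ k, shepardWeight S μ w k x = w k * gaussBasis S μ k x / den := fun k => rfl
  have hψnn : ∀ k, 0 ≤ shepardWeight S μ w k x := fun k => by
    rw [hψ k]; exact div_nonneg (le_of_lt (mul_pos (hwpos k) (hφpos k))) hdenpos.le
  have hψsum : ∑ k, shepardWeight S μ w k x = 1 := by
    simp only [hψ]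
    rw [← Finset.sum_div, ← hdendef, div_self hdenpos.ne']
  -- error rewriting
  have herr : f x - ∑ k, shepardWeight S μ w k x * f (μ k)
      = ∑ k, shepardWeight S μ w k x * (f x - f (μ k)) := by
    have h1 : ∑ k, shepardWeight S μ w k x * (f x - f (μ k))
        = (∑ k, shepardWeight S μ w k x) * f x - ∑ k, shepardWeight S μ w k x * f (μ k) := by
      rw [Finset.sum_mul]
      rw [← Finset.sum_sub_distrib]
      exact Finset.sum_congr rfl fun k _ => by ring
    rw [h1, hψsum, one_mul]
  rw [herr]
  have habs : |∑ k, shepardWeight S μ w k x * (f x - f (μ k))|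
      ≤ ∑ k, shepardWeight S μ w k x * |f x - f (μ k)| := by
    refine le_trans (Finset.abs_sum_le_sum_abs _ _) (Finset.sum_le_sum fun k _ => ?_)
    rw [abs_mul, abs_of_nonneg (hψnn k)]
  -- split into near and far
  set T := Finset.univ.filter (fun k : Fin K => ‖x - μ k‖ < r) with hTdef
  have hsplit : ∑ k, shepardWeight S μ w k x * |f x - f (μ k)|
      = (∑ k ∈ T, shepardWeight S μ w k x * |f x - f (μ k)|)
        + ∑ k ∈ Tᶜ, shepardWeight S μ w k x * |f x - f (μ k)| :=
    (Finset.sum_add_sum_compl T _).symm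
  -- near bound
  have hnear : ∑ k ∈ T, shepardWeight S μ w k x * |f x - f (μ k)| ≤ ε / 2 := by
    calc ∑ k ∈ T, shepardWeight S μ w k x * |f x - f (μ k)|
        ≤ ∑ k ∈ T, shepardWeight S μ w k x * (ε / 2) := by
          refine Finset.sum_le_sum fun k hk => ?_
          refine mul_le_mul_of_nonneg_left ?_ (hψnn k)
          have hkr : ‖x - μ k‖ < r := by
            rw [hTdef] at hk
            exact (Finset.mem_filter.mp hk).2
          have := hUC x hx (μ k) (hμD k) (by rwa [dist_eq_norm])
          rw [Real.dist_eq] at this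
          exact this.le
      _ = (∑ k ∈ T, shepardWeight S μ w k x) * (ε / 2) := by rw [Finset.sum_mul]
      _ ≤ 1 * (ε / 2) := by
          refine mul_le_mul_of_nonneg_right ?_ (by linarith)
          rw [← hψsum]
          exact Finset.sum_le_sum_of_subset_of_nonneg (Finset.subset_univ T)
            (fun k _ _ => hψnn k)
      _ = ε / 2 := one_mul _
  -- packing: K ≤ A / h ^ d
  have hKA : (K : ℝ) ≤ A / h ^ d := by
    have hpack := packing_bound x₀ hq0 hR μ (fun k => hDR _ (hμD k))
      (fun i j hij => by rw [dist_eq_norm]; exact hsep i j hij)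
    have hqd : (0:ℝ) < q ^ d := by positivity
    have hhd : (0:ℝ) < h ^ d := by positivity
    have h1 : (K : ℝ) ≤ ((R + q) / q) ^ d := by
      rw [div_pow, le_div_iff₀ hqd]
      exact hpack
    have h2 : (R + q) / q ≤ ρ * (R + 1) / h := by
      rw [div_le_div_iff₀ hq0 hhpos]
      nlinarith
    have h3 : ((R + q) / q) ^ d ≤ (ρ * (R + 1) / h) ^ d :=
      pow_le_pow_left₀ (by positivity) h2 d
    have h4 : (ρ * (R + 1) / h) ^ d = A / h ^ d := by
      rw [div_pow, hAdef]
    linarith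
  -- far bound
  have hfar : ∑ k ∈ Tᶜ, shepardWeight S μ w k x * |f x - f (μ k)|
      ≤ A * B / h ^ d * Real.exp (-κ / h ^ 2) := by
    have hexpeq : Real.exp (-(1/2) * (r ^ 2 / (CSig * h ^ 2))) = Real.exp (-κ / h ^ 2) := by
      congr 1
      rw [hκdef]
      field_simp
    have hterm : ∀ k ∈ Tᶜ, shepardWeight S μ w k x * |f x - f (μ k)|
        ≤ 2 * M * whi / den₀ * Real.exp (-κ / h ^ 2) := by
      intro k hk
      have hkr : r ≤ ‖x - μ k‖ := by
        rw [hTdef] at hk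
        have := Finset.mem_compl.mp hk
        simp only [Finset.mem_filter, Finset.mem_univ, true_and, not_lt] at this
        exact this
      have hfb : |f x - f (μ k)| ≤ 2 * M := by
        have h1 := hM x hx
        have h2 := hM (μ k) (hμD k)
        rw [Real.norm_eq_abs] at h1 h2
        calc |f x - f (μ k)| ≤ |f x| + |f (μ k)| := abs_sub _ _
          _ ≤ 2 * M := by linarith
      have hφk : gaussBasis S μ k x ≤ Real.exp (-κ / h ^ 2) := by
        refine le_trans (hgb k x).2 ?_
        rw [← hexpeq]
        apply Real.exp_le_exp.mpr
        have h1 : r ^ 2 ≤ ‖x - μ k‖ ^ 2 := by nlinarith [hr.le]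
        have h2 : r ^ 2 / (CSig * h ^ 2) ≤ ‖x - μ k‖ ^ 2 / (CSig * h ^ 2) := by gcongr
        linarith
      have hψk : shepardWeight S μ w k x ≤ whi * Real.exp (-κ / h ^ 2) / den₀ := by
        rw [hψ k]
        apply div_le_div₀ (mul_nonneg (by linarith) (Real.exp_pos _).le) ?_ hden₀ hdenlo
        exact mul_le_mul (hwB k).2 hφk (hφpos k).le (by linarith)
      calc shepardWeight S μ w k x * |f x - f (μ k)|
          ≤ shepardWeight S μ w k x * (2 * M) := mul_le_mul_of_nonneg_left hfb (hψnn k)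
        _ ≤ (whi * Real.exp (-κ / h ^ 2) / den₀) * (2 * M) := by
            refine mul_le_mul_of_nonneg_right hψk (by linarith)
        _ = 2 * M * whi / den₀ * Real.exp (-κ / h ^ 2) := by ring
    have hC0 : (0:ℝ) ≤ 2 * M * whi / den₀ * Real.exp (-κ / h ^ 2) :=
      mul_nonneg (div_nonneg (by nlinarith) hden₀.le) (Real.exp_pos _).le
    calc ∑ k ∈ Tᶜ, shepardWeight S μ w k x * |f x - f (μ k)|
        ≤ Tᶜ.card • (2 * M * whi / den₀ * Real.exp (-κ / h ^ 2)) :=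
          Finset.sum_le_card_nsmul _ _ _ hterm
      _ = (Tᶜ.card : ℝ) * (2 * M * whi / den₀ * Real.exp (-κ / h ^ 2)) := by
          rw [nsmul_eq_mul]
      _ ≤ (K : ℝ) * (2 * M * whi / den₀ * Real.exp (-κ / h ^ 2)) := by
          refine mul_le_mul_of_nonneg_right ?_ hC0
          exact_mod_cast Finset.card_le_card (Finset.subset_univ Tᶜ) |>.trans
            (le_of_eq (Finset.card_univ.trans (Fintype.card_fin K)))
      _ ≤ (A / h ^ d) * (2 * M * whi / den₀ * Real.exp (-κ / h ^ 2)) := by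
          refine mul_le_mul_of_nonneg_right hKA hC0
      _ = A * B / h ^ d * Real.exp (-κ / h ^ 2) := by
          rw [hBdef, hden₀def, Real.exp_neg]
          field_simp
  have hdec := hdecay h hhpos hhh0
  calc |∑ k, shepardWeight S μ w k x * (f x - f (μ k))|
      ≤ ∑ k, shepardWeight S μ w k x * |f x - f (μ k)| := habs
    _ = (∑ k ∈ T, shepardWeight S μ w k x * |f x - f (μ k)|)
        + ∑ k ∈ Tᶜ, shepardWeight S μ w k x * |f x - f (μ k)| := hsplit
    _ ≤ ε / 2 + A * B / h ^ d * Real.exp (-κ / h ^ 2) := add_le_add hnear hfar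
    _ < ε / 2 + ε / 2 := by linarith
    _ = ε := by ring
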